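/- arXiv:2407.03803 — 3 statements merged into one kernel-verified Lean document; each statement's English description precedes it below -/
import Mathlib

section
/- For a p-form b on ℝ^(p+q) with the standard inner product, and orthonormal vectors v₁,…,v_q, the Hodge star satisfies |(∗b)(v₁,…,v_q)| = |b(w₁,…,w_p)| ≤ comass(b), where w₁,…,w_p complete the vᵢ to an orthonormal basis. Consequently comass(∗b) ≤ comass(b), where the comass of a k-form ω is the supremum of |ω(u₁,…,u_k)| over unit vectors uᵢ. -/
open scoped BigOperators RealInnerProductSpace

/-- Comass of a k-form on a real inner product space: the supremum of |ω(v₁,…,v_k)|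
over tuples of vectors of norm at most 1. -/
noncomputable def comass {E : Type*} [NormedAddCommGroup E] [InnerProductSpace ℝ E] {k : ℕ}
    (ω : E [⋀^Fin k]→ₗ[ℝ] ℝ) : ℝ :=
  sSup {r | ∃ v : Fin k → E, (∀ i, ‖v i‖ ≤ 1) ∧ r = |ω v|}

/-- Wedge product of real-valued alternating forms (shuffle convention, so that the
wedge of dual basis covectors evaluates as a determinant). -/
noncomputable def wedge {E : Type*} [AddCommGroup E] [Module ℝ E] {p q : ℕ}
    (a : E [⋀^Fin p]→ₗ[ℝ] ℝ) (b : E [⋀^Fin q]→ₗ[ℝ] ℝ) :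
    E [⋀^Fin (p + q)]→ₗ[ℝ] ℝ :=
  (TensorProduct.lid ℝ ℝ).toLinearMap.compAlternatingMap
    ((a.domCoprod b).domDomCongr finSumFinEquiv)

/-- The standard inner product of two k-forms on Euclidean n-space, for which the
increasing wedges of standard dual basis vectors are orthonormal. -/
noncomputable def formInner {n k : ℕ}
    (a b : (EuclideanSpace ℝ (Fin n)) [⋀^Fin k]→ₗ[ℝ] ℝ) : ℝ :=
  (1 / (k.factorial : ℝ)) *
    ∑ f : Fin k → Fin n,
      a (fun i => EuclideanSpace.single (f i) 1) * b (fun i => EuclideanSpace.single (f i) 1)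

/-- The standard volume form on Euclidean n-space. -/
noncomputable def vol (n : ℕ) : (EuclideanSpace ℝ (Fin n)) [⋀^Fin n]→ₗ[ℝ] ℝ :=
  (EuclideanSpace.basisFun (Fin n) ℝ).toBasis.det

open TensorProduct Equiv
open scoped Matrix

section Aux

theorem domCoprod_eval {E : Type*} [AddCommGroup E] [Module ℝ E] {p q : ℕ}
    (a : E [⋀^Fin p]→ₗ[ℝ] ℝ) (c : E [⋀^Fin q]→ₗ[ℝ] ℝ) (m : Fin p ⊕ Fin q → E)
    (ha : ∀ u : Fin p → E, (∃ i j, u i = m (Sum.inr j)) → a u = 0) :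
    (a.domCoprod c) m = a (m ∘ Sum.inl) ⊗ₜ[ℝ] c (m ∘ Sum.inr) := by
  rw [AlternatingMap.domCoprod_apply]
  simp only [MultilinearMap.sum_apply]
  letI : Fintype (Quotient (QuotientGroup.leftRel (Perm.sumCongrHom (Fin p) (Fin q)).range)) :=
    (inferInstance : Fintype (Perm.ModSumCongr (Fin p) (Fin q)))
  refine (Fintype.sum_eq_single (Quotient.mk'' (1 : Perm (Fin p ⊕ Fin q)) :
      Perm.ModSumCongr (Fin p) (Fin q)) ?_).trans ?_
  · intro σ hσ
    induction σ using Quotient.inductionOn' with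
    | h π =>
      rw [AlternatingMap.domCoprod.summand_mk'']
      by_cases hc : ∃ i j, π (Sum.inl i) = Sum.inr j
      · obtain ⟨i, j, hij⟩ := hc
        have h0 : a (fun i => m (π (Sum.inl i))) = 0 := ha _ ⟨i, j, by rw [hij]⟩
        simp [MultilinearMap.domDomCongr_apply, MultilinearMap.domCoprod_apply, h0]
      · exfalso
        apply hσ
        push_neg at hc
        have hmaps : Set.MapsTo π (Set.range Sum.inl) (Set.range Sum.inl) := by
          rintro x ⟨i, rfl⟩
          rcases h : π (Sum.inl i) with l | r
          · exact ⟨l, rfl⟩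
          · exact absurd h (hc i r)
        have hmem := Equiv.Perm.mem_sumCongrHom_range_of_perm_mapsTo_inl hmaps
        exact Quotient.sound' (QuotientGroup.leftRel_apply.mpr (by simpa using inv_mem hmem))
  · rw [AlternatingMap.domCoprod.summand_mk'']
    simp only [MultilinearMap.domDomCongr_apply, MultilinearMap.domCoprod_apply,
      Equiv.Perm.sign_one, one_smul, MultilinearMap.smul_apply, AlternatingMap.coe_multilinearMap,
      Perm.coe_one, id_eq]
    rfl


noncomputable def detForm {n p : ℕ} (w : Fin p → EuclideanSpace ℝ (Fin n)) :
    (EuclideanSpace ℝ (Fin n)) [⋀^Fin p]→ₗ[ℝ] ℝ :=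
  (Matrix.detRowAlternating : ((Fin p → ℝ) [⋀^Fin p]→ₗ[ℝ] ℝ)).compLinearMap
    (LinearMap.pi fun i => ((innerSL ℝ (w i) : _ →L[ℝ] ℝ) : _ →ₗ[ℝ] ℝ))

theorem detForm_apply {n p : ℕ} (w : Fin p → EuclideanSpace ℝ (Fin n))
    (u : Fin p → EuclideanSpace ℝ (Fin n)) :
    detForm w u = Matrix.det (Matrix.of fun j i => ⟪w i, u j⟫) := rfl

theorem detForm_zero_of_inner_zero {n p : ℕ} (w : Fin p → EuclideanSpace ℝ (Fin n))
    (u : Fin p → EuclideanSpace ℝ (Fin n)) (t : Fin p) (h : ∀ i, ⟪w i, u t⟫ = 0) :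
    detForm w u = 0 := by
  rw [detForm_apply]
  exact Matrix.det_eq_zero_of_row_eq_zero t fun i => h i

theorem detForm_self {n p : ℕ} {w : Fin p → EuclideanSpace ℝ (Fin n)}
    (hw : Orthonormal ℝ w) : detForm w w = 1 := by
  rw [detForm_apply]
  have h1 : (Matrix.of fun j i => ⟪w i, w j⟫) = (1 : Matrix (Fin p) (Fin p) ℝ) := by
    ext j i
    rcases eq_or_ne i j with rfl | hij
    · simp [orthonormal_iff_ite.mp hw]
    · simp [orthonormal_iff_ite.mp hw, Matrix.one_apply, hij, (Ne.symm hij)]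
  rw [h1, Matrix.det_one]

theorem detForm_single {n p : ℕ} (w : Fin p → EuclideanSpace ℝ (Fin n)) (f : Fin p → Fin n) :
    detForm w (fun j => EuclideanSpace.single (f j) (1:ℝ)) =
      ∑ σ : Equiv.Perm (Fin p), ((Equiv.Perm.sign σ : ℤ) : ℝ) * ∏ i, w i (f (σ i)) := by
  rw [detForm_apply, Matrix.det_apply]
  refine Finset.sum_congr rfl fun σ _ => ?_
  rw [Units.smul_def, zsmul_eq_mul]
  congr 1
  refine Finset.prod_congr rfl fun i _ => ?_
  simp [EuclideanSpace.inner_single_right]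

theorem eucl_decomp {n : ℕ} (x : EuclideanSpace ℝ (Fin n)) :
    x = ∑ k, x k • EuclideanSpace.single k (1:ℝ) := by
  ext j
  rw [WithLp.ofLp_sum, Finset.sum_apply]
  simp [EuclideanSpace.single_apply, mul_comm]

theorem alt_expand {n k : ℕ} (ω : (EuclideanSpace ℝ (Fin n)) [⋀^Fin k]→ₗ[ℝ] ℝ)
    (u : Fin k → EuclideanSpace ℝ (Fin n)) :
    ω u = ∑ f : Fin k → Fin n,
      (∏ i, u i (f i)) * ω (fun i => EuclideanSpace.single (f i) (1:ℝ)) := by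
  have h1 : ω u = ω.toMultilinearMap (fun i => ∑ j, u i j • EuclideanSpace.single j (1:ℝ)) := by
    have : u = fun i => ∑ j, u i j • EuclideanSpace.single j (1:ℝ) := funext fun i => eucl_decomp (u i)
    rw [← this]
    rfl
  rw [h1, MultilinearMap.map_sum]
  refine Finset.sum_congr rfl fun f _ => ?_
  have := ω.toMultilinearMap.map_smul_univ (fun i => u i (f i))
    (fun i => EuclideanSpace.single (f i) (1:ℝ))
  rw [this, smul_eq_mul]
  rfl

theorem formInner_detForm {n p : ℕ} (w : Fin p → EuclideanSpace ℝ (Fin n))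
    (b : (EuclideanSpace ℝ (Fin n)) [⋀^Fin p]→ₗ[ℝ] ℝ) :
    formInner (detForm w) b = b w := by
  classical
  have hsq : ∀ σ : Equiv.Perm (Fin p), ((Equiv.Perm.sign σ : ℤ):ℝ) * ((Equiv.Perm.sign σ : ℤ):ℝ) = 1 := by
    intro σ
    have : (Equiv.Perm.sign σ : ℤ) * (Equiv.Perm.sign σ : ℤ) = 1 := by
      rw [← Units.val_mul, Int.units_mul_self]; rfl
    exact_mod_cast congrArg (fun z : ℤ => (z : ℝ)) this
  have hper : ∀ σ : Equiv.Perm (Fin p),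
      (∑ f : Fin p → Fin n, (∏ i, w i (f (σ i))) * b (fun i => EuclideanSpace.single (f i) (1:ℝ)))
      = ((Equiv.Perm.sign σ : ℤ):ℝ) * ∑ f : Fin p → Fin n,
          (∏ i, w i (f i)) * b (fun i => EuclideanSpace.single (f i) (1:ℝ)) := by
    intro σ
    rw [← Equiv.sum_comp (Equiv.arrowCongr σ (Equiv.refl (Fin n)))
        (fun f => (∏ i, w i (f (σ i))) * b (fun i => EuclideanSpace.single (f i) (1:ℝ))),
      Finset.mul_sum]
    refine Finset.sum_congr rfl fun g _ => ?_
    have e_apply : ∀ j, (Equiv.arrowCongr σ (Equiv.refl (Fin n)) g) j = g (σ.symm j) := fun _ => rfl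
    have h1 : (∏ i, w i ((Equiv.arrowCongr σ (Equiv.refl (Fin n)) g) (σ i))) = ∏ i, w i (g i) := by
      refine Finset.prod_congr rfl fun i _ => ?_
      rw [e_apply, Equiv.symm_apply_apply]
    have h2 : b (fun i => EuclideanSpace.single ((Equiv.arrowCongr σ (Equiv.refl (Fin n)) g) i) (1:ℝ))
        = ((Equiv.Perm.sign σ : ℤ):ℝ) * b (fun i => EuclideanSpace.single (g i) (1:ℝ)) := by
      have hmp := b.map_perm (fun i => EuclideanSpace.single (g i) (1:ℝ)) σ⁻¹
      have hfun : ((fun i => EuclideanSpace.single (g i) (1:ℝ)) ∘ ⇑σ⁻¹)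
          = fun i => EuclideanSpace.single ((Equiv.arrowCongr σ (Equiv.refl (Fin n)) g) i) (1:ℝ) := by
        funext i; rfl
      rw [hfun] at hmp
      rw [hmp, Equiv.Perm.sign_inv, Units.smul_def, zsmul_eq_mul]
    rw [h1, h2]
    ring
  unfold formInner
  have key : (∑ f : Fin p → Fin n,
      detForm w (fun i => EuclideanSpace.single (f i) (1:ℝ)) * b (fun i => EuclideanSpace.single (f i) (1:ℝ)))
      = (p.factorial : ℝ) * ∑ f : Fin p → Fin n,
          (∏ i, w i (f i)) * b (fun i => EuclideanSpace.single (f i) (1:ℝ)) := by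
    calc (∑ f : Fin p → Fin n, detForm w (fun i => EuclideanSpace.single (f i) (1:ℝ)) * b (fun i => EuclideanSpace.single (f i) (1:ℝ )))
        = ∑ f : Fin p → Fin n, ∑ σ : Equiv.Perm (Fin p),
            ((Equiv.Perm.sign σ : ℤ):ℝ) * ((∏ i, w i (f (σ i))) * b (fun i => EuclideanSpace.single (f i) (1:ℝ))) := by
          refine Finset.sum_congr rfl fun f _ => ?_
          rw [detForm_single, Finset.sum_mul]
          exact Finset.sum_congr rfl fun σ _ => by ring
      _ = ∑ σ : Equiv.Perm (Fin p), ∑ f : Fin p → Fin n,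
            ((Equiv.Perm.sign σ : ℤ):ℝ) * ((∏ i, w i (f (σ i))) * b (fun i => EuclideanSpace.single (f i) (1:ℝ))) :=
          Finset.sum_comm
      _ = ∑ σ : Equiv.Perm (Fin p), ∑ f : Fin p → Fin n,
            (∏ i, w i (f i)) * b (fun i => EuclideanSpace.single (f i) (1:ℝ)) := by
          refine Finset.sum_congr rfl fun σ _ => ?_
          rw [← Finset.mul_sum, hper σ, ← mul_assoc, hsq σ, one_mul]
      _ = (p.factorial : ℝ) * ∑ f : Fin p → Fin n,
            (∏ i, w i (f i)) * b (fun i => EuclideanSpace.single (f i) (1:ℝ)) := by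
          rw [Finset.sum_const, Finset.card_univ, nsmul_eq_mul]
          congr 1
          simp [Fintype.card_perm]
  rw [key, ← alt_expand b w, ← mul_assoc]
  have : (1 / (p.factorial : ℝ)) * (p.factorial : ℝ) = 1 := by
    field_simp
  rw [this, one_mul]

theorem wedge_eval {E : Type*} [AddCommGroup E] [Module ℝ E] {p q : ℕ}
    (a : E [⋀^Fin p]→ₗ[ℝ] ℝ) (c : E [⋀^Fin q]→ₗ[ℝ] ℝ)
    (w : Fin p → E) (v : Fin q → E)
    (ha : ∀ u : Fin p → E, (∃ i j, u i = v j) → a u = 0) :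
    wedge a c (Sum.elim w v ∘ ⇑finSumFinEquiv.symm) = a w * c v := by
  have hm : (Sum.elim w v ∘ ⇑finSumFinEquiv.symm) ∘ ⇑finSumFinEquiv = Sum.elim w v := by
    funext s
    simp
  unfold wedge
  rw [LinearMap.compAlternatingMap_apply, AlternatingMap.domDomCongr_apply, hm,
    domCoprod_eval a c (Sum.elim w v) (by intro u h; exact ha u h)]
  simp [TensorProduct.lid_tmul]


theorem abs_vol_eq_one {n : ℕ} (u : Fin n → EuclideanSpace ℝ (Fin n))
    (hu : Orthonormal ℝ u) : |vol n u| = 1 := by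
  classical
  unfold vol
  rw [Module.Basis.det_apply]
  set M : Matrix (Fin n) (Fin n) ℝ := (EuclideanSpace.basisFun (Fin n) ℝ).toBasis.toMatrix u with hM
  have hMij : ∀ i j, M i j = u j i := by
    intro i j
    simp [hM, Module.Basis.toMatrix_apply]
  have hMtM : Mᵀ * M = 1 := by
    ext j k
    rw [Matrix.mul_apply]
    have : ∑ i, Mᵀ j i * M i k = ⟪u j, u k⟫ := by
      rw [PiLp.inner_apply]
      refine Finset.sum_congr rfl fun i _ => ?_
      simp [Matrix.transpose_apply, hMij, mul_comm]
    rw [this]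
    rcases eq_or_ne j k with rfl | hjk
    · simp [orthonormal_iff_ite.mp hu, hu.1 j]
    · simp [orthonormal_iff_ite.mp hu, hjk, Matrix.one_apply]
  have hdet : M.det * M.det = 1 := by
    have := congrArg Matrix.det hMtM
    rwa [Matrix.det_mul, Matrix.det_transpose, Matrix.det_one] at this
  rcases mul_self_eq_one_iff.mp hdet with h | h <;> rw [h] <;> norm_num


theorem coord_le_norm {n : ℕ} (x : EuclideanSpace ℝ (Fin n)) (k : Fin n) : |x k| ≤ ‖x‖ := by
  rw [EuclideanSpace.norm_eq, show |x k| = Real.sqrt (‖x k‖^2) by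
    rw [Real.sqrt_sq_eq_abs]; simp [Real.norm_eq_abs]]
  exact Real.sqrt_le_sqrt (Finset.single_le_sum (f := fun i => ‖x i‖^2)
    (fun i _ => by positivity) (Finset.mem_univ k))


theorem comass_bound {n k : ℕ} (ω : (EuclideanSpace ℝ (Fin n)) [⋀^Fin k]→ₗ[ℝ] ℝ)
    (u : Fin k → EuclideanSpace ℝ (Fin n)) (hu : ∀ i, ‖u i‖ ≤ 1) :
    |ω u| ≤ ∑ f : Fin k → Fin n, |ω (fun i => EuclideanSpace.single (f i) (1:ℝ))| := by
  rw [alt_expand ω u]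
  refine (Finset.abs_sum_le_sum_abs _ _).trans ?_
  refine Finset.sum_le_sum fun f _ => ?_
  rw [abs_mul]
  have h1 : |∏ i, u i (f i)| ≤ 1 := by
    rw [Finset.abs_prod]
    exact Finset.prod_le_one (fun i _ => abs_nonneg _)
      (fun i _ => (coord_le_norm _ _).trans (hu i))
  exact mul_le_of_le_one_left (abs_nonneg _) h1

theorem comass_bddAbove {n k : ℕ} (ω : (EuclideanSpace ℝ (Fin n)) [⋀^Fin k]→ₗ[ℝ] ℝ) :
    BddAbove {r | ∃ v : Fin k → EuclideanSpace ℝ (Fin n), (∀ i, ‖v i‖ ≤ 1) ∧ r = |ω v|} := by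
  refine ⟨∑ f : Fin k → Fin n, |ω (fun i => EuclideanSpace.single (f i) (1:ℝ))|, ?_⟩
  rintro r ⟨u, hu, rfl⟩
  exact comass_bound ω u hu

theorem comass_set_nonempty {n k : ℕ} (ω : (EuclideanSpace ℝ (Fin n)) [⋀^Fin k]→ₗ[ℝ] ℝ) :
    {r | ∃ v : Fin k → EuclideanSpace ℝ (Fin n), (∀ i, ‖v i‖ ≤ 1) ∧ r = |ω v|}.Nonempty :=
  ⟨|ω (fun _ => 0)|, fun _ => 0, fun _ => by simp, rfl⟩

theorem le_comass {n k : ℕ} (ω : (EuclideanSpace ℝ (Fin n)) [⋀^Fin k]→ₗ[ℝ] ℝ)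
    (u : Fin k → EuclideanSpace ℝ (Fin n)) (hu : ∀ i, ‖u i‖ ≤ 1) : |ω u| ≤ comass ω :=
  le_csSup (comass_bddAbove ω) ⟨u, hu, rfl⟩

theorem comass_le {n k : ℕ} (ω : (EuclideanSpace ℝ (Fin n)) [⋀^Fin k]→ₗ[ℝ] ℝ) (K : ℝ)
    (hK : ∀ u : Fin k → EuclideanSpace ℝ (Fin n), (∀ i, ‖u i‖ ≤ 1) → |ω u| ≤ K) :
    comass ω ≤ K := csSup_le (comass_set_nonempty ω) (by rintro r ⟨u, hu, rfl⟩; exact hK u hu)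

theorem phi_eq {q m : ℕ} (φ : Fin q → Fin m) (hinj : Function.Injective φ)
    (hle : ∀ k, (φ k : ℕ) ≤ (k : ℕ)) : ∀ k, (φ k : ℕ) = (k : ℕ) := by
  have H : ∀ N : ℕ, ∀ k : Fin q, (k : ℕ) = N → (φ k : ℕ) = (k : ℕ) := by
    intro N
    induction N using Nat.strong_induction_on with
    | _ N IH =>
    intro k hk
    by_contra hne
    have hlt : (φ k : ℕ) < (k : ℕ) := lt_of_le_of_ne (hle k) hne
    have hjq : (φ k : ℕ) < q := lt_trans hlt k.isLt
    have h1 : (φ ⟨(φ k : ℕ), hjq⟩ : ℕ) = ((⟨(φ k : ℕ), hjq⟩ : Fin q) : ℕ) :=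
      IH _ (hk ▸ hlt) _ rfl
    have h2 : φ (⟨(φ k : ℕ), hjq⟩ : Fin q) = φ k := Fin.ext (by rw [h1])
    have h3 := congrArg Fin.val (hinj h2)
    simp at h3
    omega
  exact fun k => H (k : ℕ) k rfl

theorem triangular_bound {p q : ℕ}
    (c : (EuclideanSpace ℝ (Fin (p + q))) [⋀^Fin q]→ₗ[ℝ] ℝ) (K : ℝ) (hK0 : 0 ≤ K)
    (hK : ∀ (v : Fin q → EuclideanSpace ℝ (Fin (p + q)))
      (w : Fin p → EuclideanSpace ℝ (Fin (p + q))),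
      Orthonormal ℝ (Sum.elim w v) → |c v| ≤ K)
    (u : Fin q → EuclideanSpace ℝ (Fin (p + q))) (hu : ∀ i, ‖u i‖ ≤ 1) :
    |c u| ≤ K := by
  classical
  have h : Module.finrank ℝ (EuclideanSpace ℝ (Fin (p + q))) = Fintype.card (Fin (q + p)) := by
    simp [finrank_euclideanSpace_fin]
    omega
  haveI : WellFoundedLT (Fin (q + p)) := inferInstance
  set f : Fin (q + p) → EuclideanSpace ℝ (Fin (p + q)) :=
    Fin.append u (fun _ => 0) with hf
  set g := InnerProductSpace.gramSchmidtOrthonormalBasis h f with hg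
  set r : Fin (q + p) → Fin q → ℝ := fun i k => ⟪g i, u k⟫ with hr
  have htri : ∀ (k : Fin q) (i : Fin (q + p)), (k : ℕ) < (i : ℕ) → r i k = 0 := by
    intro k i hki
    have hfl : f (Fin.castAdd p k) = u k := Fin.append_left u _ k
    have := InnerProductSpace.gramSchmidtOrthonormalBasis_inv_triangular h f
      (i := Fin.castAdd p k) (j := i) (by rwa [Fin.lt_def])
    rw [hfl] at this
    exact this
  have hdecomp : ∀ k, u k = ∑ i, r i k • g i := fun k => (g.sum_repr' (u k)).symm
  have hexp : c u = ∑ φ : Fin q → Fin (q + p), (∏ k, r (φ k) k) • c (fun k => g (φ k)) := by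
    have h1 : c u = c.toMultilinearMap (fun k => ∑ i, r i k • g i) := by
      have : u = fun k => ∑ i, r i k • g i := funext hdecomp
      rw [← this]
      rfl
    rw [h1, MultilinearMap.map_sum]
    refine Finset.sum_congr rfl fun φ _ => ?_
    exact c.toMultilinearMap.map_smul_univ (fun k => r (φ k) k) (fun k => g (φ k))
  have hsingle : c u = (∏ k, r (Fin.castAdd p k) k) • c (fun k => g (Fin.castAdd p k)) := by
    rw [hexp]
    refine Fintype.sum_eq_single (fun k => Fin.castAdd p k) ?_
    intro φ hφ
    by_cases hinj : Function.Injective φ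
    · have hnle : ¬ ∀ k, (φ k : ℕ) ≤ (k : ℕ) := by
        intro hle
        exact hφ (funext fun k => Fin.ext (phi_eq φ hinj hle k))
      push_neg at hnle
      obtain ⟨k, hk⟩ := hnle
      have hz : (∏ k' : Fin q, r (φ k') k') = 0 :=
        Finset.prod_eq_zero (Finset.mem_univ k) (htri k (φ k) hk)
      rw [hz, zero_smul]
    · rw [Function.not_injective_iff] at hinj
      obtain ⟨k, l, hkl, hne⟩ := hinj
      rw [AlternatingMap.map_eq_zero_of_eq c _ (by rw [hkl]) hne, smul_zero]
  have hprod : |∏ k, r (Fin.castAdd p k) k| ≤ 1 := by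
    rw [Finset.abs_prod]
    refine Finset.prod_le_one (fun k _ => abs_nonneg _) (fun k _ => ?_)
    calc |r (Fin.castAdd p k) k| ≤ ‖g (Fin.castAdd p k)‖ * ‖u k‖ := abs_real_inner_le_norm _ _
      _ ≤ 1 := by
          rw [g.orthonormal.1]
          simpa using hu k
  have hlast : |c (fun k => g (Fin.castAdd p k))| ≤ K := by
    refine hK (fun k => g (Fin.castAdd p k)) (fun i => g (Fin.natAdd q i)) ?_
    have : Sum.elim (fun i => g (Fin.natAdd q i)) (fun k => g (Fin.castAdd p k))
        = g ∘ (Sum.elim (fun i : Fin p => Fin.natAdd q i) (fun k : Fin q => Fin.castAdd p k)) := by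
      funext x
      cases x <;> rfl
    rw [this]
    refine g.orthonormal.comp _ ?_
    intro x y hxy
    rcases x with i | k <;> rcases y with i' | k' <;>
      simp only [Sum.elim_inl, Sum.elim_inr, Fin.ext_iff, Fin.coe_natAdd, Fin.coe_castAdd] at hxy <;>
      first
        | (congr 1; omega)
        | (exact absurd hxy (by omega))
        | (exact absurd hxy (by have := k.isLt; omega))
        | (exact absurd hxy (by have := k'.isLt; omega))
  calc |c u| = |∏ k, r (Fin.castAdd p k) k| * |c (fun k => g (Fin.castAdd p k))| := by
        rw [hsingle, smul_eq_mul, abs_mul]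
    _ ≤ 1 * K := by
        exact mul_le_mul hprod hlast (abs_nonneg _) zero_le_one
    _ = K := one_mul K

theorem hodge_eval (p q : ℕ)
    (hodge : ((EuclideanSpace ℝ (Fin (p + q))) [⋀^Fin p]→ₗ[ℝ] ℝ) →
      ((EuclideanSpace ℝ (Fin (p + q))) [⋀^Fin q]→ₗ[ℝ] ℝ))
    (hhodge : ∀ (a : (EuclideanSpace ℝ (Fin (p + q))) [⋀^Fin p]→ₗ[ℝ] ℝ)
      (b : (EuclideanSpace ℝ (Fin (p + q))) [⋀^Fin p]→ₗ[ℝ] ℝ),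
      wedge a (hodge b) = formInner a b • vol (p + q))
    (b : (EuclideanSpace ℝ (Fin (p + q))) [⋀^Fin p]→ₗ[ℝ] ℝ)
    (v : Fin q → EuclideanSpace ℝ (Fin (p + q)))
    (w : Fin p → EuclideanSpace ℝ (Fin (p + q)))
    (hON : Orthonormal ℝ (Sum.elim w v)) :
    |(hodge b) v| = |b w| := by
  have hW : Orthonormal ℝ w := by
    have := hON.comp Sum.inl Sum.inl_injective
    simpa using this
  have ha0 : ∀ u : Fin p → EuclideanSpace ℝ (Fin (p + q)), (∃ i j, u i = v j) →
      detForm w u = 0 := by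
    rintro u ⟨i, j, hij⟩
    refine detForm_zero_of_inner_zero w u i fun i' => ?_
    rw [hij]
    exact hON.2 (show (Sum.inl i' : Fin p ⊕ Fin q) ≠ Sum.inr j from Sum.inl_ne_inr)
  have heq := congrArg (fun F => F (Sum.elim w v ∘ ⇑finSumFinEquiv.symm))
    (hhodge (detForm w) b)
  rw [wedge_eval (detForm w) (hodge b) w v ha0, detForm_self hW, one_mul,
    AlternatingMap.smul_apply, formInner_detForm, smul_eq_mul] at heq
  have hONn : Orthonormal ℝ (Sum.elim w v ∘ ⇑finSumFinEquiv.symm) :=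
    hON.comp _ (Equiv.injective _)
  rw [heq, abs_mul, abs_vol_eq_one _ hONn, mul_one]

end Aux

/-- If `hodge` is a Hodge star operator from p-forms to q-forms on
ℝ^(p+q) (characterized by a ∧ ∗b = ⟨a,b⟩ vol), and the orthonormal vectors v₁,…,v_q
are completed to an orthonormal basis by w₁,…,w_p, then
|(∗b)(v₁,…,v_q)| = |b(w₁,…,w_p)| ≤ comass b; consequently comass(∗b) ≤ comass(b). -/
theorem hodge_star_eval_eq_and_comass_le (p q : ℕ)
    (hodge : ((EuclideanSpace ℝ (Fin (p + q))) [⋀^Fin p]→ₗ[ℝ] ℝ) →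
      ((EuclideanSpace ℝ (Fin (p + q))) [⋀^Fin q]→ₗ[ℝ] ℝ))
    (hhodge : ∀ (a : (EuclideanSpace ℝ (Fin (p + q))) [⋀^Fin p]→ₗ[ℝ] ℝ)
      (b : (EuclideanSpace ℝ (Fin (p + q))) [⋀^Fin p]→ₗ[ℝ] ℝ),
      wedge a (hodge b) = formInner a b • vol (p + q))
    (b : (EuclideanSpace ℝ (Fin (p + q))) [⋀^Fin p]→ₗ[ℝ] ℝ)
    (v : Fin q → EuclideanSpace ℝ (Fin (p + q)))
    (w : Fin p → EuclideanSpace ℝ (Fin (p + q)))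
    (hON : Orthonormal ℝ (Sum.elim w v)) :
    |(hodge b) v| = |b w| ∧ |b w| ≤ comass b ∧ comass (hodge b) ≤ comass b := by
  have h1 : |(hodge b) v| = |b w| := hodge_eval p q hodge hhodge b v w hON
  have hwn : ∀ i, ‖w i‖ ≤ 1 := fun i => le_of_eq (by simpa using hON.1 (Sum.inl i))
  have h2 : |b w| ≤ comass b := le_comass b w hwn
  refine ⟨h1, h2, ?_⟩
  refine comass_le (hodge b) (comass b) fun u hu => ?_
  have hK0 : (0:ℝ) ≤ comass b :=
    (abs_nonneg _).trans (le_comass b (fun _ => 0) fun _ => by simp)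
  refine triangular_bound (hodge b) (comass b) hK0 ?_ u hu
  intro v' w' hON'
  rw [hodge_eval p q hodge hhodge b v' w' hON']
  exact le_comass b w' fun i => le_of_eq (by simpa using hON'.1 (Sum.inl i))
end

section
/- For every lattice L in the Euclidean plane ℝ², λ₁(L) · λ₂(L*) ≤ 2/√3, where L* is the dual lattice. -/
/-- k-th successive minimum of a lattice w.r.t. a norm function N. -/
noncomputable def succMin {B : Type*} [AddCommGroup B] [Module ℝ B]
    (N : B → ℝ) (L : Submodule ℤ B) (k : ℕ) : ℝ :=
  sInf {r | ∃ v : Fin k → B, (∀ i, v i ∈ L) ∧ LinearIndependent ℝ v ∧ ∀ i, N (v i) ≤ r}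

/-- The dual lattice inside the dual space. -/
def dualLattice {B : Type*} [AddCommGroup B] [Module ℝ B] (L : Submodule ℤ B) :
    Submodule ℤ (Module.Dual ℝ B) where
  carrier := {f | ∀ x ∈ L, ∃ m : ℤ, f x = (m : ℝ)}
  add_mem' := by
    intro f g hf hg x hx
    obtain ⟨m, hm⟩ := hf x hx
    obtain ⟨k, hk⟩ := hg x hx
    exact ⟨m + k, by simp [hm, hk]⟩
  zero_mem' := fun x _ => ⟨0, by simp⟩
  smul_mem' := by
    intro c f hf x hx
    obtain ⟨m, hm⟩ := hf x hx
    refine ⟨c * m, ?_⟩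
    have : (c • f) x = (c : ℝ) * f x := by simp
    rw [this, hm]; push_cast; ring

/-- The dual norm of a norm function N. -/
noncomputable def dualNorm {B : Type*} [AddCommGroup B] [Module ℝ B]
    (N : B → ℝ) (f : Module.Dual ℝ B) : ℝ :=
  sSup {r | ∃ x : B, N x ≤ 1 ∧ r = |f x|}

/-- The dual lattice inside a real inner product space. -/
def dualLatticeE {E : Type*} [NormedAddCommGroup E] [InnerProductSpace ℝ E]
    (L : Submodule ℤ E) : Submodule ℤ E where
  carrier := {y | ∀ x ∈ L, ∃ m : ℤ, (inner ℝ x y : ℝ) = (m : ℝ)}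
  add_mem' := by
    intro f g hf hg x hx
    obtain ⟨m, hm⟩ := hf x hx
    obtain ⟨k, hk⟩ := hg x hx
    exact ⟨m + k, by rw [inner_add_right, hm, hk]; push_cast; ring⟩
  zero_mem' := fun x _ => ⟨0, by simp⟩
  smul_mem' := by
    intro c y hy x hx
    obtain ⟨m, hm⟩ := hy x hx
    refine ⟨c * m, ?_⟩
    rw [← Int.cast_smul_eq_zsmul ℝ, inner_smul_right, hm]
    push_cast; ring

noncomputable abbrev E2 := EuclideanSpace ℝ (Fin 2)

lemma exists_norm_min (L : Submodule ℤ E2) [DiscreteTopology L]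
    (S : Set E2) (hS : S ⊆ L) (hne : S.Nonempty) :
    ∃ x ∈ S, ∀ y ∈ S, ‖x‖ ≤ ‖y‖ := by
  obtain ⟨w, hw⟩ := hne
  have hdisc : DiscreteTopology ((L : Set E2) : Set E2) := by
    have : DiscreteTopology L := inferInstance
    exact this
  have hclosed : IsClosed (L : Set E2) := by
    have hd : DiscreteTopology L.toAddSubgroup := by
      have : DiscreteTopology L := inferInstance
      exact this
    exact AddSubgroup.isClosed_of_discrete (H := L.toAddSubgroup)
  have hfin : (Metric.closedBall (0 : E2) ‖w‖ ∩ (L : Set E2)).Finite :=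
    Metric.finite_isBounded_inter_isClosed DiscreteTopology.isDiscrete Metric.isBounded_closedBall hclosed
  have hfin2 : (S ∩ Metric.closedBall (0 : E2) ‖w‖).Finite := by
    refine hfin.subset ?_
    rintro x ⟨hx1, hx2⟩
    exact ⟨hx2, hS hx1⟩
  have hne2 : (S ∩ Metric.closedBall (0 : E2) ‖w‖).Nonempty :=
    ⟨w, hw, by simp [Metric.mem_closedBall, dist_eq_norm]⟩
  obtain ⟨x, hx, hmin⟩ := Set.exists_min_image _ (fun y => ‖y‖) hfin2 hne2
  refine ⟨x, hx.1, fun y hy => ?_⟩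
  by_cases h : ‖y‖ ≤ ‖w‖
  · exact hmin y ⟨hy, by simp [Metric.mem_closedBall, dist_eq_norm, h]⟩
  · have := hmin w ⟨hw, by simp [Metric.mem_closedBall, dist_eq_norm]⟩
    linarith

lemma inner_E2 (u v : E2) : (inner ℝ u v : ℝ) = u 0 * v 0 + u 1 * v 1 := by
  simp [PiLp.inner_apply, Fin.sum_univ_two]; ring

lemma norm_sq_E2 (u : E2) : ‖u‖^2 = u 0 ^2 + u 1^2 := by
  rw [← real_inner_self_eq_norm_sq]; simp only [PiLp.inner_apply, Fin.sum_univ_two, RCLike.inner_apply, conj_trivial]; ring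

set_option maxHeartbeats 2000000

/-- For every lattice L in the Euclidean plane, λ₁(L)·λ₂(L*) ≤ 2/√3. -/
theorem euclidean_plane_bound (L : Submodule ℤ (EuclideanSpace ℝ (Fin 2)))
    [DiscreteTopology L] [IsZLattice ℝ L] :
    succMin (fun x => ‖x‖) L 1 * succMin (fun x => ‖x‖) (dualLatticeE L) 2 ≤
      2 / Real.sqrt 3 := by

  have hspan : Submodule.span ℝ (L : Set E2) = ⊤ := IsZLattice.span_top
  -- shortest nonzero vector u
  have hS0ne : ({x : E2 | x ∈ L ∧ x ≠ 0}).Nonempty := by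
    by_contra h
    rw [Set.not_nonempty_iff_eq_empty] at h
    have hsub : (L : Set E2) ⊆ {(0 : E2)} := by
      intro x hx
      by_contra hx0
      exact Set.eq_empty_iff_forall_notMem.1 h x ⟨hx, by simpa using hx0⟩
    have : Submodule.span ℝ (L : Set E2) ≤ Submodule.span ℝ {(0:E2)} :=
      Submodule.span_mono hsub
    rw [hspan, Submodule.span_zero_singleton] at this
    have h2 : (EuclideanSpace.single (0 : Fin 2) (1:ℝ)) = 0 := by
      have := this (Submodule.mem_top (x := EuclideanSpace.single (0 : Fin 2) (1:ℝ)))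
      simpa using this
    have := congrFun (congrArg (fun x : E2 => (x : Fin 2 → ℝ)) h2) 0
    simp [EuclideanSpace.single_apply] at this
  obtain ⟨u, ⟨huL, hu0⟩, humin⟩ := exists_norm_min L _ (fun x hx => hx.1) hS0ne
  -- shortest vector v outside ℝu
  have hS1ne : ({x : E2 | x ∈ L ∧ x ∉ Submodule.span ℝ {u}}).Nonempty := by
    by_contra h
    rw [Set.not_nonempty_iff_eq_empty] at h
    have hsub : (L : Set E2) ⊆ (Submodule.span ℝ {u} : Set E2) := by
      intro x hx
      by_contra hx0
      exact Set.eq_empty_iff_forall_notMem.1 h x ⟨hx, hx0⟩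
    have hle : (⊤ : Submodule ℝ E2) ≤ Submodule.span ℝ {u} := by
      rw [← hspan]
      exact Submodule.span_le.2 hsub
    have htop : Submodule.span ℝ {u} = ⊤ := top_le_iff.1 hle
    have h1 : Module.finrank ℝ (Submodule.span ℝ {u}) = 1 := finrank_span_singleton hu0
    rw [htop] at h1
    rw [finrank_top] at h1
    simp [finrank_euclideanSpace_fin] at h1
  obtain ⟨v, ⟨hvL, hvns⟩, hvmin⟩ := exists_norm_min L _ (fun x hx => hx.1) hS1ne
  have hv0 : v ≠ 0 := fun h => hvns (h ▸ Submodule.zero_mem _)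
  have huv : ‖u‖ ≤ ‖v‖ := humin v ⟨hvL, hv0⟩
  have hupos : (0:ℝ) < ‖u‖ := norm_pos_iff.2 hu0
  have hvpos : (0:ℝ) < ‖v‖ := norm_pos_iff.2 hv0
  set p : ℝ := inner ℝ u v with hp_def
  clear_value p
  -- reduction: |p| ≤ ‖u‖²/2
  have hred : |p| ≤ ‖u‖^2 / 2 := by
    set t : ℝ := p / ‖u‖^2 with ht_def
    set n : ℤ := round t with hn_def
    have hmem : v - (n:ℤ) • u ∈ L := sub_mem hvL (Submodule.smul_mem _ _ huL)
    have hns : v - (n:ℤ) • u ∉ Submodule.span ℝ {u} := by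
      intro h
      apply hvns
      have : v = (v - (n:ℤ) • u) + (n:ℝ) • u := by
        rw [← Int.cast_smul_eq_zsmul ℝ]; abel
      rw [this]
      exact Submodule.add_mem _ h (Submodule.smul_mem _ _ (Submodule.mem_span_singleton_self u))
    have hge : ‖v‖ ≤ ‖v - (n:ℤ) • u‖ := hvmin _ ⟨hmem, hns⟩
    have hexp : ‖v - (n:ℤ) • u‖^2 = ‖v‖^2 - 2*(n:ℝ)*p + (n:ℝ)^2 * ‖u‖^2 := by
      rw [← Int.cast_smul_eq_zsmul ℝ, norm_sub_sq_real, real_inner_smul_right,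
        norm_smul, real_inner_comm]
      simp [abs_mul, mul_pow, sq_abs]
      ring_nf
      rw [hp_def, inner_E2]
    have hge2 : ‖v‖^2 ≤ ‖v - (n:ℤ) • u‖^2 := by
      have := norm_nonneg (v - (n:ℤ) • u)
      nlinarith
    have hkey : 2*(n:ℝ)*t ≤ (n:ℝ)^2 := by
      have hu2 : (0:ℝ) < ‖u‖^2 := by positivity
      have hpt : p = t * ‖u‖^2 := by rw [ht_def]; field_simp
      rw [hexp, hpt] at hge2
      nlinarith
    have habs : |t - (n:ℝ)| ≤ 1/2 := abs_sub_round t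
    have ht2 : t^2 ≤ 1/4 := by nlinarith [sq_abs (t - (n:ℝ)), abs_nonneg (t - (n:ℝ))]
    have htle : |t| ≤ 1/2 := by
      rw [abs_le]; constructor <;> nlinarith
    have hpt : p = t * ‖u‖^2 := by rw [ht_def]; field_simp
    rw [hpt, abs_mul, abs_of_nonneg (by positivity : (0:ℝ) ≤ ‖u‖^2)]
    nlinarith [sq_nonneg ‖u‖]
  set d : ℝ := u 0 * v 1 - u 1 * v 0 with hd_def
  clear_value d
  have hlag : d^2 + p^2 = ‖u‖^2 * ‖v‖^2 := by
    rw [hd_def, hp_def, inner_E2, norm_sq_E2, norm_sq_E2]; ring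
  have hu2v2 : ‖u‖^2 ≤ ‖v‖^2 := by nlinarith
  have hp2 : p^2 ≤ ‖u‖^2 * ‖u‖^2 / 4 := by
    nlinarith [sq_abs p, mul_self_le_mul_self (abs_nonneg p) hred]
  have hd2 : (3/4) * (‖u‖ * ‖v‖)^2 ≤ d^2 := by
    nlinarith [mul_le_mul_of_nonneg_left hu2v2 (sq_nonneg ‖u‖)]
  have hdpos : (0:ℝ) < |d| := by
    rw [abs_pos]
    intro h
    rw [h] at hd2
    nlinarith [mul_pos hupos hvpos]
  have hdne : d ≠ 0 := abs_pos.1 hdpos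
  -- basis property
  have hbasis : ∀ w ∈ L, ∃ m k : ℤ, w = (m:ℝ) • u + (k:ℝ) • v := by
    intro w hwL
    set α : ℝ := (w 0 * v 1 - w 1 * v 0) / d with hα_def
    clear_value α
    set β : ℝ := (u 0 * w 1 - u 1 * w 0) / d with hβ_def
    clear_value β
    have hw_eq : w = α • u + β • v := by
      apply PiLp.ext
      intro i
      fin_cases i <;>
      · simp only [PiLp.add_apply, PiLp.smul_apply, smul_eq_mul, hα_def, hβ_def, Fin.zero_eta, Fin.mk_one]
        field_simp
        rw [hd_def]
        ring
    set A : ℝ := α - round α with hA_def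
    clear_value A
    set B : ℝ := β - round β with hB_def
    clear_value B
    have hA2 : |A| ≤ 1/2 := by rw [hA_def]; exact abs_sub_round α
    have hB2 : |B| ≤ 1/2 := by rw [hB_def]; exact abs_sub_round β
    set w' : E2 := w - (round α : ℤ) • u - (round β : ℤ) • v with hw'_def
    clear_value w'
    have hw'L : w' ∈ L := by
      rw [hw'_def]
      exact sub_mem (sub_mem hwL (Submodule.smul_mem _ _ huL)) (Submodule.smul_mem _ _ hvL)
    have hw'eq : w' = A • u + B • v := by
      rw [hw'_def, hA_def, hB_def]
      nth_rewrite 1 [hw_eq]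
      rw [← Int.cast_smul_eq_zsmul ℝ ((round α : ℤ)), ← Int.cast_smul_eq_zsmul ℝ ((round β : ℤ))]
      push_cast
      module
    have hB0 : B = 0 := by
      by_contra hB0
      have hns : w' ∉ Submodule.span ℝ {u} := by
        intro h
        apply hvns
        obtain ⟨c, hc⟩ := Submodule.mem_span_singleton.1 h
        have hveq : v = (B⁻¹ * (c - A)) • u := by
          have h1 : A • u + B • v = c • u := by rw [← hw'eq, hc]
          have : B • v = (c - A) • u := by
            rw [sub_smul]; exact eq_sub_of_add_eq' h1
          rw [mul_smul, ← this, smul_smul, inv_mul_cancel₀ hB0, one_smul]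
        rw [hveq]
        exact Submodule.smul_mem _ _ (Submodule.mem_span_singleton_self u)
      have hge : ‖v‖ ≤ ‖w'‖ := hvmin _ ⟨hw'L, hns⟩
      have hexp : ‖w'‖^2 = A^2*‖u‖^2 + 2*A*B*p + B^2*‖v‖^2 := by
        rw [hw'eq, hp_def, inner_E2, norm_sq_E2, norm_sq_E2, norm_sq_E2]
        simp only [PiLp.add_apply, PiLp.smul_apply, smul_eq_mul]
        ring
      have h2ABp : 2*A*B*p ≤ 2 * |A| * |B| * |p| := by
        calc 2*A*B*p ≤ |2*A*B*p| := le_abs_self _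
        _ = 2 * |A| * |B| * |p| := by rw [abs_mul, abs_mul, abs_mul]; simp
      have hge2 : ‖v‖^2 ≤ ‖w'‖^2 := by nlinarith [norm_nonneg w']
      have hAA : A^2 ≤ 1/4 := by nlinarith [sq_abs A, mul_self_le_mul_self (abs_nonneg A) hA2]
      have hBB : B^2 ≤ 1/4 := by nlinarith [sq_abs B, mul_self_le_mul_self (abs_nonneg B) hB2]
      have hAB : |A| * |B| ≤ 1/4 := by
        nlinarith [mul_le_mul hA2 hB2 (abs_nonneg B) (by norm_num : (0:ℝ) ≤ 1/2)]
      have hABp : 2 * |A| * |B| * |p| ≤ ‖u‖^2/4 := by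
        nlinarith [mul_le_mul hAB hred (abs_nonneg p) (by norm_num : (0:ℝ) ≤ 1/4)]
      have e1 : A^2*‖u‖^2 ≤ (1/4)*‖u‖^2 := by nlinarith [sq_nonneg ‖u‖]
      have e2 : B^2*‖v‖^2 ≤ (1/4)*‖v‖^2 := by nlinarith [sq_nonneg ‖v‖]
      have hv2pos : (0:ℝ) < ‖v‖^2 := by positivity
      linarith
    have hA0 : A = 0 := by
      by_contra hA0
      have hw'2 : w' = A • u := by rw [hw'eq, hB0]; module
      have hw'ne : w' ≠ 0 := by
        rw [hw'2]
        exact smul_ne_zero hA0 hu0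
      have hge : ‖u‖ ≤ ‖w'‖ := humin _ ⟨hw'L, hw'ne⟩
      rw [hw'2, norm_smul] at hge
      have : |A| * ‖u‖ ≤ (1/2) * ‖u‖ := by
        apply mul_le_mul_of_nonneg_right hA2 (norm_nonneg u)
      simp only [Real.norm_eq_abs] at hge
      nlinarith
    refine ⟨round α, round β, ?_⟩
    have hαint : α = (round α : ℝ) := by
      have := hA_def ▸ hA0; linarith [sub_eq_zero.1 this]
    have hβint : β = (round β : ℝ) := by
      have := hB_def ▸ hB0; linarith [sub_eq_zero.1 this]
    rw [hw_eq, ← hαint, ← hβint]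
  -- dual vectors
  set y1 : E2 := (WithLp.equiv 2 (Fin 2 → ℝ)).symm ![v 1 / d, -(v 0) / d] with hy1_def
  set y2 : E2 := (WithLp.equiv 2 (Fin 2 → ℝ)).symm ![-(u 1) / d, u 0 / d] with hy2_def
  have hy1c : y1 0 = v 1 / d ∧ y1 1 = -(v 0) / d := by
    constructor <;> simp [hy1_def, WithLp.equiv_symm_apply, PiLp.toLp_apply]
  have hy2c : y2 0 = -(u 1) / d ∧ y2 1 = u 0 / d := by
    constructor <;> simp [hy2_def, WithLp.equiv_symm_apply, PiLp.toLp_apply]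
  clear_value y1 y2
  have hu_y1 : (inner ℝ u y1 : ℝ) = 1 := by
    rw [inner_E2, hy1c.1, hy1c.2]
    field_simp
    rw [hd_def]; ring
  have hv_y1 : (inner ℝ v y1 : ℝ) = 0 := by
    rw [inner_E2, hy1c.1, hy1c.2]; field_simp; ring
  have hu_y2 : (inner ℝ u y2 : ℝ) = 0 := by
    rw [inner_E2, hy2c.1, hy2c.2]; field_simp; ring
  have hv_y2 : (inner ℝ v y2 : ℝ) = 1 := by
    rw [inner_E2, hy2c.1, hy2c.2]
    field_simp
    rw [hd_def]; ring
  have hinner_comb : ∀ (x : E2) (m k : ℤ) (y : E2), x = (m:ℝ) • u + (k:ℝ) • v →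
      (inner ℝ x y : ℝ) = (m:ℝ) * (inner ℝ u y : ℝ) + (k:ℝ) * (inner ℝ v y : ℝ) := by
    intro x m k y hx
    rw [hx, inner_add_left, real_inner_smul_left, real_inner_smul_left]
  have hy1L : y1 ∈ dualLatticeE L := by
    intro x hx
    obtain ⟨m, k, hmk⟩ := hbasis x hx
    refine ⟨m, ?_⟩
    rw [hinner_comb x m k y1 hmk, hu_y1, hv_y1]; ring
  have hy2L : y2 ∈ dualLatticeE L := by
    intro x hx
    obtain ⟨m, k, hmk⟩ := hbasis x hx
    refine ⟨k, ?_⟩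
    rw [hinner_comb x m k y2 hmk, hu_y2, hv_y2]; ring
  have hind : LinearIndependent ℝ ![y1, y2] := by
    rw [LinearIndependent.pair_iff]
    intro s t hst
    have h1 : (inner ℝ u (s • y1 + t • y2) : ℝ) = s := by
      rw [inner_add_right, real_inner_smul_right, real_inner_smul_right, hu_y1, hu_y2]; ring
    have h2 : (inner ℝ v (s • y1 + t • y2) : ℝ) = t := by
      rw [inner_add_right, real_inner_smul_right, real_inner_smul_right, hv_y1, hv_y2]; ring
    rw [hst, inner_zero_right] at h1 h2
    exact ⟨h1.symm, h2.symm⟩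
  -- norms of dual vectors
  set M : ℝ := ‖v‖ / |d| with hM_def
  have hMnn : (0:ℝ) ≤ M := by positivity
  have hy1n : ‖y1‖ ≤ M := by
    have h1 : ‖y1‖^2 = ‖v‖^2 / d^2 := by
      rw [norm_sq_E2, hy1c.1, hy1c.2, norm_sq_E2]
      field_simp
      ring
    have h2 : M^2 = ‖v‖^2 / d^2 := by
      rw [hM_def, div_pow, sq_abs]
    nlinarith [norm_nonneg y1, hMnn]
  have hy2n : ‖y2‖ ≤ M := by
    have h1 : ‖y2‖^2 = ‖u‖^2 / d^2 := by
      rw [norm_sq_E2, hy2c.1, hy2c.2, norm_sq_E2]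
      field_simp
      ring
    have h2 : M^2 = ‖v‖^2 / d^2 := by
      rw [hM_def, div_pow, sq_abs]
    have hd2pos : (0:ℝ) < d^2 := by nlinarith [mul_pos hdpos hdpos, sq_abs d]
    have h3 : ‖y2‖^2 ≤ M^2 := by
      rw [h1, h2]
      gcongr
    nlinarith [norm_nonneg y2, hMnn]
  -- succMin bounds
  have hbdd1 : ∀ k : ℕ, k ≠ 0 → ∀ (L' : Submodule ℤ E2), BddBelow
      {r | ∃ f : Fin k → E2, (∀ i, f i ∈ L') ∧ LinearIndependent ℝ f ∧ ∀ i, ‖f i‖ ≤ r} := by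
    intro k hk L'
    refine ⟨0, fun r hr => ?_⟩
    obtain ⟨f, _, _, hf3⟩ := hr
    exact le_trans (norm_nonneg _) (hf3 ⟨0, Nat.pos_of_ne_zero hk⟩)
  have h1 : succMin (fun x => ‖x‖) L 1 ≤ ‖u‖ := by
    apply csInf_le (hbdd1 1 one_ne_zero L)
    exact ⟨fun _ => u, fun _ => huL, linearIndependent_unique_iff.2 hu0, fun _ => le_refl _⟩
  have h2 : succMin (fun x => ‖x‖) (dualLatticeE L) 2 ≤ M := by
    apply csInf_le (hbdd1 2 two_ne_zero (dualLatticeE L))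
    refine ⟨![y1, y2], ?_, hind, ?_⟩
    · intro i
      fin_cases i
      · simpa using hy1L
      · simpa using hy2L
    · intro i; fin_cases i <;> simp [hy1n, hy2n]
  have h2nn : (0:ℝ) ≤ succMin (fun x => ‖x‖) (dualLatticeE L) 2 := by
    apply Real.sInf_nonneg
    intro r hr
    obtain ⟨f, _, _, hf3⟩ := hr
    exact le_trans (norm_nonneg _) (hf3 0)
  have hstep : succMin (fun x => ‖x‖) L 1 * succMin (fun x => ‖x‖) (dualLatticeE L) 2 ≤
      ‖u‖ * M := mul_le_mul h1 h2 h2nn (norm_nonneg u)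
  refine le_trans hstep ?_
  -- final arithmetic
  have hs3 : (0:ℝ) < Real.sqrt 3 := Real.sqrt_pos.2 (by norm_num)
  have hs3sq : Real.sqrt 3 ^ 2 = 3 := Real.sq_sqrt (by norm_num)
  rw [hM_def, ← mul_div_assoc, div_le_div_iff₀ hdpos hs3]
  have habs : |d|^2 = d^2 := sq_abs d
  nlinarith [mul_pos hupos hvpos, mul_nonneg (mul_nonneg hupos.le hvpos.le) hs3.le,
    sq_nonneg (‖u‖ * ‖v‖ * Real.sqrt 3 - 2 * |d|), abs_nonneg d]
end

section
/- For every lattice L in ℝ² with the standard Euclidean norm, λ₁(L) · λ₁(L*) ≤ √2, where L* is the dual lattice. -/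
lemma succMin_one_le' {B : Type*} [NormedAddCommGroup B] [NormedSpace ℝ B]
    (L : Submodule ℤ B) {u : B} (hu : u ∈ L) (hu0 : u ≠ 0) :
    succMin (fun x => ‖x‖) L 1 ≤ ‖u‖ := by
  apply csInf_le
  · exact ⟨0, fun r ⟨v, _, _, hle⟩ => le_trans (norm_nonneg (v 0)) (hle 0)⟩
  · exact ⟨fun _ => u, fun _ => hu, linearIndependent_unique_iff.mpr hu0, fun _ => le_refl _⟩

lemma succMin_one_nonneg' {B : Type*} [NormedAddCommGroup B] [NormedSpace ℝ B]
    (L : Submodule ℤ B) : 0 ≤ succMin (fun x => ‖x‖) L 1 := by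
  apply Real.sInf_nonneg
  rintro r ⟨v, _, _, hle⟩
  exact le_trans (norm_nonneg (v 0)) (hle 0)

open MeasureTheory Module Submodule ZSpan
open scoped ENNReal NNReal

private lemma mahler_aux (L : Submodule ℤ (EuclideanSpace ℝ (Fin 2)))
    [DiscreteTopology L] [IsZLattice ℝ L] :
    ∃ v w : EuclideanSpace ℝ (Fin 2), v ∈ L ∧ v ≠ 0 ∧ w ∈ dualLatticeE L ∧ w ≠ 0 ∧
      ‖v‖ * ‖w‖ ≤ Real.sqrt 2 := by
  classical
  have hrank : Module.finrank ℤ L = 2 := by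
    rw [ZLattice.rank ℝ L, finrank_euclideanSpace_fin]
  let b : Basis (Fin 2) ℤ L :=
    (Module.Free.chooseBasis ℤ L).reindex (Fintype.equivFinOfCardEq (by
      rw [← Module.finrank_eq_card_chooseBasisIndex, hrank]))
  let B := b.ofZLatticeBasis ℝ L
  -- representation of lattice vectors in the basis
  have hrepr : ∀ x (hx : x ∈ L), x = ((b.repr ⟨x, hx⟩ 0 : ℤ) : ℝ) • B 0
      + ((b.repr ⟨x, hx⟩ 1 : ℤ) : ℝ) • B 1 := by
    intro x hx
    have h := B.sum_repr x
    rw [Fin.sum_univ_two] at h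
    have c0 : (B.repr x) 0 = ((b.repr ⟨x, hx⟩ 0 : ℤ) : ℝ) :=
      b.ofZLatticeBasis_repr_apply ℝ L ⟨x, hx⟩ 0
    have c1 : (B.repr x) 1 = ((b.repr ⟨x, hx⟩ 1 : ℤ) : ℝ) :=
      b.ofZLatticeBasis_repr_apply ℝ L ⟨x, hx⟩ 1
    rw [c0, c1] at h
    exact h.symm
  set Ddet : ℝ := B 0 0 * B 1 1 - B 0 1 * B 1 0 with hDdet
  -- key integrality of 2x2 determinants
  have key : ∀ u ∈ L, ∀ x ∈ L, ∃ m : ℤ, u 0 * x 1 - u 1 * x 0 = (m : ℝ) * Ddet := by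
    intro u hu x hx
    refine ⟨b.repr ⟨u, hu⟩ 0 * b.repr ⟨x, hx⟩ 1 - b.repr ⟨u, hu⟩ 1 * b.repr ⟨x, hx⟩ 0, ?_⟩
    have h1 := hrepr u hu
    have h2 := hrepr x hx
    have e1 : ∀ j, u j = ((b.repr ⟨u, hu⟩ 0 : ℤ) : ℝ) * B 0 j
        + ((b.repr ⟨u, hu⟩ 1 : ℤ) : ℝ) * B 1 j := by
      intro j; conv_lhs => rw [h1]
      simp [PiLp.add_apply, PiLp.smul_apply, smul_eq_mul]
    have e2 : ∀ j, x j = ((b.repr ⟨x, hx⟩ 0 : ℤ) : ℝ) * B 0 j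
        + ((b.repr ⟨x, hx⟩ 1 : ℤ) : ℝ) * B 1 j := by
      intro j; conv_lhs => rw [h2]
      simp [PiLp.add_apply, PiLp.smul_apply, smul_eq_mul]
    rw [e1 0, e1 1, e2 0, e2 1]
    push_cast
    ring
  -- volume of the fundamental domain
  have hdetB : (EuclideanSpace.basisFun (Fin 2) ℝ).toBasis.det ⇑B = Ddet := by
    rw [Basis.det_apply, Matrix.det_fin_two]
    simp only [Basis.toMatrix_apply, OrthonormalBasis.coe_toBasis_repr_apply,
      EuclideanSpace.basisFun_repr]
    ring
  have hvolF : volume (fundamentalDomain B) = ENNReal.ofReal |Ddet| := by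
    rw [measure_congr (fundamentalDomain_ae_parallelepiped B volume),
      ← (EuclideanSpace.basisFun (Fin 2) ℝ).addHaar_eq_volume, Measure.addHaar_parallelepiped, hdetB]
  set d : ℝ := |Ddet| with hd_def
  have hFne : volume (fundamentalDomain B) ≠ 0 := measure_fundamentalDomain_ne_zero B
  have hd : 0 < d := by
    by_contra h
    push_neg at h
    exact hFne (hvolF.trans (ENNReal.ofReal_eq_zero.mpr h))
  have hDne : Ddet ≠ 0 := fun h => by simp [hd_def, h] at hd
  -- Minkowski
  set r : ℝ := Real.sqrt (Real.sqrt 2 * d) with hr_def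
  have hsqrt2 : (1.414 : ℝ) ≤ Real.sqrt 2 := by
    rw [Real.le_sqrt (by norm_num) (by norm_num)]
    norm_num
  have hr2 : r ^ 2 = Real.sqrt 2 * d := Real.sq_sqrt (by positivity)
  have fund := ZSpan.isAddFundamentalDomain' B volume
  rw [b.ofZLatticeBasis_span ℝ] at fund
  have hGamma : Real.Gamma ((Fintype.card (Fin 2) : ℝ) / 2 + 1) = 1 := by
    rw [Fintype.card_fin]
    norm_num
  have hlt : volume (fundamentalDomain B) * 2 ^ finrank ℝ (EuclideanSpace ℝ (Fin 2))
      < volume (Metric.ball (0 : EuclideanSpace ℝ (Fin 2)) r) := by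
    rw [hvolF, EuclideanSpace.volume_ball, hGamma, finrank_euclideanSpace_fin, Fintype.card_fin,
      ← ENNReal.ofReal_pow (Real.sqrt_nonneg _), hr2, Real.sq_sqrt Real.pi_pos.le]
    rw [show ((2 : ℝ≥0∞) ^ 2) = ENNReal.ofReal 4 by norm_num [ENNReal.ofReal_ofNat],
      ← ENNReal.ofReal_mul hd.le, ← ENNReal.ofReal_mul (by positivity)]
    rw [div_one]
    apply ENNReal.ofReal_lt_ofReal_iff_of_nonneg (by positivity) |>.mpr
    nlinarith [Real.pi_gt_d6, hd, hsqrt2]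
  have hcnt : Countable ↥L.toAddSubgroup := inferInstanceAs (Countable L)
  have hsymm : ∀ y ∈ Metric.ball (0 : EuclideanSpace ℝ (Fin 2)) r,
      -y ∈ Metric.ball (0 : EuclideanSpace ℝ (Fin 2)) r := by
    intro y hy
    rw [mem_ball_zero_iff, norm_neg, ← mem_ball_zero_iff]
    exact hy
  obtain ⟨x, hx0, hxmem⟩ :=
    exists_ne_zero_mem_lattice_of_measure_mul_two_pow_lt_measure fund hsymm
      (convex_ball 0 r) hlt
  set v : EuclideanSpace ℝ (Fin 2) := (x : EuclideanSpace ℝ (Fin 2)) with hv_def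
  have hvL : v ∈ L := x.2
  have hv0 : v ≠ 0 := by
    simp only [hv_def, ne_eq, ZeroMemClass.coe_eq_zero]
    exact hx0
  have hvr : ‖v‖ < r := mem_ball_zero_iff.mp hxmem
  -- the dual vector
  set w : EuclideanSpace ℝ (Fin 2) :=
    Ddet⁻¹ • (WithLp.equiv 2 (Fin 2 → ℝ)).symm ![-(v 1), v 0] with hw_def
  have hw0' : w 0 = Ddet⁻¹ * (-(v 1)) := by
    simp [hw_def, WithLp.equiv_symm_apply, PiLp.toLp_apply]
  have hw1' : w 1 = Ddet⁻¹ * v 0 := by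
    simp [hw_def, WithLp.equiv_symm_apply, PiLp.toLp_apply]
  have hwdual : w ∈ dualLatticeE L := by
    intro x hx
    obtain ⟨m, hm⟩ := key v hvL x hx
    refine ⟨m, ?_⟩
    have hinner : (inner ℝ x w : ℝ) = x 0 * w 0 + x 1 * w 1 := by
      simp [PiLp.inner_apply, RCLike.inner_apply, Fin.sum_univ_two, mul_comm]
    rw [hinner, hw0', hw1']
    field_simp
    linear_combination hm
  have hwnorm : ‖w‖ = d⁻¹ * ‖v‖ := by
    have h1 : ‖(WithLp.equiv 2 (Fin 2 → ℝ)).symm ![-(v 1), v 0]‖ = ‖v‖ := by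
      rw [EuclideanSpace.norm_eq, EuclideanSpace.norm_eq, Fin.sum_univ_two, Fin.sum_univ_two]
      simp only [WithLp.equiv_symm_apply, PiLp.toLp_apply, Matrix.cons_val_zero, Matrix.cons_val_one,
        Matrix.head_cons, norm_neg]
      congr 1
      ring
    rw [hw_def, norm_smul, h1, Real.norm_eq_abs, abs_inv, hd_def]
  have hw0 : w ≠ 0 := by
    intro h
    have h2 : ‖w‖ = 0 := by rw [h, norm_zero]
    rw [hwnorm] at h2
    rcases mul_eq_zero.mp h2 with h3 | h3
    · exact inv_ne_zero (ne_of_gt hd) h3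
    · exact hv0 (norm_eq_zero.mp h3)
  refine ⟨v, w, hvL, hv0, hwdual, hw0, ?_⟩
  rw [hwnorm]
  have hv2 : ‖v‖ * ‖v‖ ≤ Real.sqrt 2 * d := by
    nlinarith [norm_nonneg v, hvr, hr2, Real.sqrt_nonneg (Real.sqrt 2 * d)]
  calc ‖v‖ * (d⁻¹ * ‖v‖) = (‖v‖ * ‖v‖) * d⁻¹ := by ring
    _ ≤ (Real.sqrt 2 * d) * d⁻¹ := by
        apply mul_le_mul_of_nonneg_right hv2 (by positivity)
    _ = Real.sqrt 2 := by field_simp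

/-- Mahler: For every lattice L in the Euclidean plane,
λ₁(L)·λ₁(L*) ≤ √2. -/
theorem mahler_two_dim (L : Submodule ℤ (EuclideanSpace ℝ (Fin 2)))
    [DiscreteTopology L] [IsZLattice ℝ L] :
    succMin (fun x => ‖x‖) L 1 * succMin (fun x => ‖x‖) (dualLatticeE L) 1 ≤
      Real.sqrt 2 := by
  obtain ⟨v, w, hvL, hv0, hwD, hw0, hvw⟩ := mahler_aux L
  calc succMin (fun x => ‖x‖) L 1 * succMin (fun x => ‖x‖) (dualLatticeE L) 1
      ≤ ‖v‖ * ‖w‖ :=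
        mul_le_mul (succMin_one_le' L hvL hv0) (succMin_one_le' (dualLatticeE L) hwD hw0)
          (succMin_one_nonneg' (dualLatticeE L)) (norm_nonneg v)
    _ ≤ Real.sqrt 2 := hvw
end
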